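/- Finite termination of Douglas–Rachford shadow sequence: Suppose C ⊆ ℝ^n is closed, S ⊆ ℝ^n is an affine subspace, C ∩ S ≠ ∅, and the DR iterates x_{k+1} = P_S(z_k), u_{k+1} ∈ P_C(2x_{k+1} − z_k), z_{k+1} = z_k + u_{k+1} − x_{k+1} satisfy z_k → z*, u_k, x_k → x* = P_S(z*). If C is prox-regular at x* for x* − z* and x* − z* ∈ int(N_C(x*)) (where N_C is the limiting normal cone), then there exists K such that u_k = x* for all k ≥ K. -/

import Mathlib

set_option maxHeartbeats 1000000


open Filter

variable {n : ℕ}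

/-- `P` is the metric projection onto the set `S`. -/
def IsMetricProj (S : Set (EuclideanSpace ℝ (Fin n)))
    (P : EuclideanSpace ℝ (Fin n) → EuclideanSpace ℝ (Fin n)) : Prop :=
  ∀ x, P x ∈ S ∧ ∀ y ∈ S, ‖x - P x‖ ≤ ‖x - y‖

/-- `w` is a (possibly non-unique) metric projection of `x` onto `C`. -/
def IsProjPt (C : Set (EuclideanSpace ℝ (Fin n)))
    (x w : EuclideanSpace ℝ (Fin n)) : Prop :=
  w ∈ C ∧ ∀ y ∈ C, ‖x - w‖ ≤ ‖x - y‖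

/-- The proximal normal cone of `C` at `x`: `cone (proj_C⁻¹(x) - x)`. -/
def proxNormalCone (C : Set (EuclideanSpace ℝ (Fin n)))
    (x : EuclideanSpace ℝ (Fin n)) : Set (EuclideanSpace ℝ (Fin n)) :=
  {v | ∃ t : ℝ, 0 ≤ t ∧ ∃ y, IsProjPt C y x ∧ v = t • (y - x)}

/-- The limiting normal cone of `C` at `x`: limits of proximal normals at nearby points. -/
def limitingNormalCone (C : Set (EuclideanSpace ℝ (Fin n)))
    (x : EuclideanSpace ℝ (Fin n)) : Set (EuclideanSpace ℝ (Fin n)) :=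
  {v | ∃ xs vs : ℕ → EuclideanSpace ℝ (Fin n),
    (∀ k, xs k ∈ C) ∧ (∀ k, vs k ∈ proxNormalCone C (xs k)) ∧
    Tendsto xs atTop (nhds x) ∧ Tendsto vs atTop (nhds v)}

section Aux

open Metric
open scoped RealInnerProductSpace

/-- Existence of a metric projection point onto a nonempty closed subset. -/
private lemma projPt_exists {C : Set (EuclideanSpace ℝ (Fin n))} (hC : IsClosed C)
    (hne : C.Nonempty) (y : EuclideanSpace ℝ (Fin n)) : ∃ w, IsProjPt C y w := by
  obtain ⟨c₀, hc₀⟩ := hne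
  have hcpt : IsCompact (C ∩ closedBall y (dist y c₀)) :=
    (isCompact_closedBall y (dist y c₀)).inter_left hC
  have hmem : c₀ ∈ C ∩ closedBall y (dist y c₀) :=
    ⟨hc₀, by simp [Metric.mem_closedBall, dist_comm]⟩
  obtain ⟨w, hwmem, hwmin⟩ := hcpt.exists_isMinOn ⟨c₀, hmem⟩
    ((continuous_const.dist continuous_id).continuousOn (f := fun c => dist y c))
  refine ⟨w, hwmem.1, fun c hc => ?_⟩
  rw [← dist_eq_norm, ← dist_eq_norm]
  by_cases hcb : c ∈ closedBall y (dist y c₀)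
  · exact hwmin ⟨hc, hcb⟩
  · have h1 : dist y w ≤ dist y c₀ := hwmin hmem
    have h2 : dist y c₀ ≤ dist y c := by
      have := Metric.mem_closedBall.not.mp hcb
      rw [dist_comm c y] at this
      linarith [not_le.mp this]
    linarith

private lemma norm_inv_smul_self {x : EuclideanSpace ℝ (Fin n)} (h : x ≠ 0) :
    ‖‖x‖⁻¹ • x‖ = 1 := by
  rw [norm_smul, Real.norm_of_nonneg (inv_nonneg.mpr (norm_nonneg x)),
    inv_mul_cancel₀ (norm_ne_zero_iff.mpr h)]

private lemma isProjPt_self {C : Set (EuclideanSpace ℝ (Fin n))}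
    {w : EuclideanSpace ℝ (Fin n)} (hw : w ∈ C) : IsProjPt C w w :=
  ⟨hw, fun y _ => by simp⟩

/-- The basic quadratic inequality satisfied by a projection point. -/
private lemma projPt_inner_le {C : Set (EuclideanSpace ℝ (Fin n))}
    {y w c : EuclideanSpace ℝ (Fin n)} (h : IsProjPt C y w) (hc : c ∈ C) :
    2 * ⟪y - w, c - w⟫ ≤ ‖c - w‖ ^ 2 := by
  have h1 : ‖y - w‖ ≤ ‖y - c‖ := h.2 c hc
  have h1' : ‖y - w‖ ^ 2 ≤ ‖y - c‖ ^ 2 := pow_le_pow_left₀ (norm_nonneg _) h1 2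
  have h2 : y - c = (y - w) - (c - w) := by abel
  have h3 : ‖(y - w) - (c - w)‖ ^ 2 = ‖y - w‖^2 - 2*⟪y - w, c - w⟫ + ‖c - w‖^2 :=
    norm_sub_sq_real _ _
  rw [h2, h3] at h1'
  linarith

/-- Shrinking the point towards its projection keeps the projection. -/
private lemma projPt_shrink {C : Set (EuclideanSpace ℝ (Fin n))}
    {y w : EuclideanSpace ℝ (Fin n)} (h : IsProjPt C y w) {s : ℝ}
    (h0 : 0 ≤ s) (h1 : s ≤ 1) : IsProjPt C (w + s • (y - w)) w := by
  refine ⟨h.1, fun c hc => ?_⟩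
  have key : ‖y - w‖ ≤ ‖y - c‖ := h.2 c hc
  have e1 : (w + s • (y - w)) - w = s • (y - w) := by abel
  have e2 : y - (w + s • (y - w)) = (1 - s) • (y - w) := by module
  have e3 : dist y c ≤ dist y (w + s • (y - w)) + dist (w + s • (y - w)) c :=
    dist_triangle _ _ _
  rw [dist_eq_norm, dist_eq_norm, dist_eq_norm, e2] at e3
  rw [e1]
  rw [norm_smul, Real.norm_of_nonneg h0]
  rw [norm_smul, Real.norm_of_nonneg (by linarith : (0:ℝ) ≤ 1 - s)] at e3
  nlinarith [norm_nonneg (y - w)]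

/-- Uniform continuity (with explicit tolerance) of the possibly multivalued projection
on a compact ball where the projection is single-valued. -/
private lemma proj_uniform {C : Set (EuclideanSpace ℝ (Fin n))} (hC : IsClosed C)
    {xst : EuclideanSpace ℝ (Fin n)} (hxst : xst ∈ C) {ε : ℝ} (hε : 0 < ε)
    (huniq : ∀ y ∈ ball xst ε, ∀ w w', IsProjPt C y w → IsProjPt C y w' → w = w')
    {θ : ℝ} (hθ : 0 < θ) :
    ∃ h₀ > 0, ∀ y y' w w', y ∈ closedBall xst (ε/4) → y' ∈ closedBall xst (ε/4) →
      ‖y - y'‖ ≤ h₀ → IsProjPt C y w → IsProjPt C y' w' → ‖w - w'‖ ≤ θ := by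
  by_contra hcon
  push_neg at hcon
  have hcon' : ∀ m : ℕ, ∃ y y' w w', y ∈ closedBall xst (ε/4) ∧ y' ∈ closedBall xst (ε/4) ∧
      ‖y - y'‖ ≤ 1/((m:ℝ)+1) ∧ IsProjPt C y w ∧ IsProjPt C y' w' ∧ θ < ‖w - w'‖ := by
    intro m
    obtain ⟨y, y', w, w', h1, h2, h3, h4, h5, h6⟩ := hcon (1/((m:ℝ)+1)) (by positivity)
    exact ⟨y, y', w, w', h1, h2, h3, h4, h5, h6⟩
  choose Y Y' W W' hY hY' hnear hPW hPW' hfar using hcon'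
  -- projections are bounded
  have hWb : ∀ m, W m ∈ closedBall xst (ε/2) := by
    intro m
    have o1 : ‖Y m - W m‖ ≤ ‖Y m - xst‖ := (hPW m).2 xst hxst
    have o2 : ‖Y m - xst‖ ≤ ε/4 := mem_closedBall_iff_norm.mp (hY m)
    have : ‖W m - xst‖ ≤ ‖W m - Y m‖ + ‖Y m - xst‖ := norm_sub_le_norm_sub_add_norm_sub _ _ _
    rw [norm_sub_rev (W m) (Y m)] at this
    exact mem_closedBall_iff_norm.mpr (by linarith)
  have hW'b : ∀ m, W' m ∈ closedBall xst (ε/2) := by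
    intro m
    have o1 : ‖Y' m - W' m‖ ≤ ‖Y' m - xst‖ := (hPW' m).2 xst hxst
    have o2 : ‖Y' m - xst‖ ≤ ε/4 := mem_closedBall_iff_norm.mp (hY' m)
    have : ‖W' m - xst‖ ≤ ‖W' m - Y' m‖ + ‖Y' m - xst‖ := norm_sub_le_norm_sub_add_norm_sub _ _ _
    rw [norm_sub_rev (W' m) (Y' m)] at this
    exact mem_closedBall_iff_norm.mpr (by linarith)
  -- three subsequence extractions
  obtain ⟨a, haK, φ₁, hφ₁, hY1⟩ := (isCompact_closedBall xst (ε/4)).tendsto_subseq hY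
  obtain ⟨p, _, φ₂, hφ₂, hW2⟩ := (isCompact_closedBall xst (ε/2)).tendsto_subseq
    (fun m => hWb (φ₁ m))
  obtain ⟨p', _, φ₃, hφ₃, hW'3⟩ := (isCompact_closedBall xst (ε/2)).tendsto_subseq
    (fun m => hW'b (φ₁ (φ₂ m)))
  set Φ : ℕ → ℕ := fun i => φ₁ (φ₂ (φ₃ i)) with hΦ
  have hΦmono : StrictMono Φ := hφ₁.comp (hφ₂.comp hφ₃)
  have hΦtop : Tendsto Φ atTop atTop := hΦmono.tendsto_atTop
  have hYt : Tendsto (fun i => Y (Φ i)) atTop (nhds a) :=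
    hY1.comp (hφ₂.comp hφ₃).tendsto_atTop
  have hWt : Tendsto (fun i => W (Φ i)) atTop (nhds p) := hW2.comp hφ₃.tendsto_atTop
  have hW't : Tendsto (fun i => W' (Φ i)) atTop (nhds p') := hW'3
  have hdiff : Tendsto (fun i => Y (Φ i) - Y' (Φ i)) atTop (nhds 0) := by
    exact squeeze_zero_norm (fun i => hnear (Φ i))
      (tendsto_one_div_add_atTop_nhds_zero_nat.comp hΦtop)
  have hY't : Tendsto (fun i => Y' (Φ i)) atTop (nhds a) := by
    have := hYt.sub hdiff
    simpa using this
  -- p and p' are both projections of a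
  have hpC : p ∈ C := hC.mem_of_tendsto hWt (Eventually.of_forall fun i => (hPW (Φ i)).1)
  have hp'C : p' ∈ C := hC.mem_of_tendsto hW't (Eventually.of_forall fun i => (hPW' (Φ i)).1)
  have hpProj : IsProjPt C a p := by
    refine ⟨hpC, fun c hc => ?_⟩
    exact le_of_tendsto_of_tendsto' ((hYt.sub hWt).norm) ((hYt.sub tendsto_const_nhds).norm)
      (fun i => (hPW (Φ i)).2 c hc)
  have hp'Proj : IsProjPt C a p' := by
    refine ⟨hp'C, fun c hc => ?_⟩
    exact le_of_tendsto_of_tendsto' ((hY't.sub hW't).norm) ((hY't.sub tendsto_const_nhds).norm)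
      (fun i => (hPW' (Φ i)).2 c hc)
  have haball : a ∈ ball xst ε := by
    have := mem_closedBall.mp haK
    exact mem_ball.mpr (by linarith)
  have hpp' : p = p' := huniq a haball p p' hpProj hp'Proj
  have hlim : θ ≤ ‖p - p'‖ :=
    ge_of_tendsto ((hWt.sub hW't).norm) (Eventually.of_forall fun i => (hfar (Φ i)).le)
  rw [hpp'] at hlim
  simp at hlim
  linarith

/-- The "sun" lemma: a realized proximal normal direction extends to uniform radius,
provided the projection is single-valued on a ball. Proved by an Euler polygon argument. -/
private lemma sun_lemma {C : Set (EuclideanSpace ℝ (Fin n))} (hC : IsClosed C)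
    {xst : EuclideanSpace ℝ (Fin n)} (hxst : xst ∈ C) {ε : ℝ} (hε : 0 < ε)
    (huniq : ∀ y ∈ ball xst ε, ∀ w w', IsProjPt C y w → IsProjPt C y w' → w = w')
    {q v : EuclideanSpace ℝ (Fin n)} (hq : ‖q - xst‖ ≤ ε/16) (hv : ‖v‖ = 1)
    {σ ρ : ℝ} (hσ : 0 < σ) (hσρ : σ ≤ ρ) (hρ : ρ ≤ ε/32)
    (hstart : IsProjPt C (q + σ • v) q) :
    IsProjPt C (q + ρ • v) q := by
  have hqC : q ∈ C := hstart.1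
  have hρ0 : 0 < ρ := lt_of_lt_of_le hσ hσρ
  refine ⟨hqC, fun c hc => ?_⟩
  have hgoal_lhs : ‖(q + ρ • v) - q‖ = ρ := by
    simp [norm_smul, Real.norm_of_nonneg hρ0.le, hv]
  rw [hgoal_lhs]
  by_contra hlt
  push_neg at hlt
  set γ : ℝ := ρ - ‖q + ρ • v - c‖ with hγdef
  have hγ : 0 < γ := by simp only [hγdef]; linarith
  clear_value γ
  rcases eq_or_lt_of_le hσρ with hcase | hcase
  · -- σ = ρ : direct contradiction with hstart
    have h3 := hstart.2 c hc
    have h2 : ‖(q + σ • v) - q‖ = σ := by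
      simp [norm_smul, Real.norm_of_nonneg hσ.le, hv]
    rw [h2] at h3
    rw [hcase] at h3
    linarith
  · -- σ < ρ
    set T : ℝ := ρ - σ with hTdef
    have hT : 0 < T := by simp only [hTdef]; linarith
    have hTρ : T ≤ ρ := by simp only [hTdef]; linarith
    have hTσρ : σ + T = ρ := by simp only [hTdef]; ring
    clear_value T
    -- choose κ
    set κ : ℝ := min 1 (min (γ/(4*(T+1))) (σ*γ^2/(32*T^2*(σ+T)+1))) with hκdef
    have hκpos : 0 < κ := by
      apply lt_min (by norm_num)
      apply lt_min (by positivity) (by positivity)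
    have hκ1 : κ ≤ 1 := min_le_left _ _
    have hκa : κ ≤ γ/(4*(T+1)) := le_trans (min_le_right _ _) (min_le_left _ _)
    have hκb : κ ≤ σ*γ^2/(32*T^2*(σ+T)+1) := le_trans (min_le_right _ _) (min_le_right _ _)
    clear_value κ
    set θ : ℝ := σ*κ/2 with hθdef
    have hθpos : 0 < θ := by positivity
    have hθκσ : 2*θ = σ*κ := by rw [hθdef]; ring
    clear_value θ
    obtain ⟨h₀, hh₀, hmod⟩ := proj_uniform hC hxst hε huniq hθpos
    -- choose N
    have hmpos : 0 < min h₀ (σ*κ) := lt_min hh₀ (by positivity)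
    obtain ⟨N, hN⟩ := exists_nat_gt (T / min h₀ (σ*κ))
    have hNpos : 0 < (N:ℝ) := lt_of_le_of_lt (by positivity) hN
    have hN0 : (N:ℝ) ≠ 0 := ne_of_gt hNpos
    set h : ℝ := T / N with hhdef
    have hhpos : 0 < h := by positivity
    have hhm : h ≤ min h₀ (σ*κ) := by
      rw [hhdef, div_le_iff₀ hNpos]
      calc T = (T / min h₀ (σ*κ)) * min h₀ (σ*κ) := by field_simp
        _ ≤ N * min h₀ (σ*κ) := by
            apply mul_le_mul_of_nonneg_right hN.le hmpos.le
        _ = min h₀ (σ*κ) * N := by ring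
    have hhh₀ : h ≤ h₀ := le_trans hhm (min_le_left _ _)
    have hhσκ : h ≤ σ*κ := le_trans hhm (min_le_right _ _)
    have hNh : (N:ℝ) * h = T := by rw [hhdef]; field_simp
    clear_value h
    -- the projection selection
    have hex : ∀ y, ∃ w, IsProjPt C y w := projPt_exists hC ⟨xst, hxst⟩ 
    choose pr hpr using hex
    -- polygon
    set q0 : EuclideanSpace ℝ (Fin n) := q + σ • v with hq0def
    set step : EuclideanSpace ℝ (Fin n) → EuclideanSpace ℝ (Fin n) :=
      fun z => z + (h / ‖z - pr z‖) • (z - pr z) with hstepdef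
    set Y : ℕ → EuclideanSpace ℝ (Fin n) := fun i => step^[i] q0 with hYdef
    have hYsucc : ∀ i, Y (i+1) = Y i + (h / ‖Y i - pr (Y i)‖) • (Y i - pr (Y i)) := by
      intro i
      simp only [hYdef, Function.iterate_succ_apply']
      rfl
    have hY0 : Y 0 = q0 := rfl
    clear_value Y
    -- q0 is in the ball, pr q0 = q
    have hq0ball : q0 ∈ ball xst ε := by
      rw [mem_ball_iff_norm, hq0def]
      have : ‖q + σ • v - xst‖ ≤ ‖q - xst‖ + ‖σ • v‖ := by
        rw [add_sub_right_comm]; exact norm_add_le _ _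
      rw [norm_smul, Real.norm_of_nonneg hσ.le, hv] at this
      have hσε : σ ≤ ε/32 := le_trans hσρ hρ
      linarith
    have hprq0 : pr q0 = q := huniq q0 hq0ball (pr q0) q (hpr q0) hstart
    have hd0 : ‖Y 0 - pr (Y 0)‖ = σ := by
      rw [hY0, hprq0, hq0def]
      simp [norm_smul, Real.norm_of_nonneg hσ.le, hv]
    -- main invariant
    have main : ∀ i, i ≤ N → ‖Y i - q0‖ ≤ i * h ∧ σ + i * h * (1-κ) ≤ ‖Y i - pr (Y i)‖ := by
      intro i
      induction i with
      | zero =>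
        intro _
        refine ⟨by simp [hY0], by simp [hd0]⟩
      | succ i ih =>
        intro hisucc
        have hiN : i ≤ N := Nat.le_of_succ_le hisucc
        obtain ⟨iha, ihb⟩ := ih hiN
        have hih : (i:ℝ) * h ≤ T := by
          calc (i:ℝ) * h ≤ N * h := by
                apply mul_le_mul_of_nonneg_right _ hhpos.le
                exact_mod_cast hiN
            _ = T := hNh
        have hi1h : ((i:ℝ)+1) * h ≤ T := by
          calc ((i:ℝ)+1) * h ≤ N * h := by
                apply mul_le_mul_of_nonneg_right _ hhpos.le
                exact_mod_cast hisucc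
            _ = T := hNh
        set d : ℝ := ‖Y i - pr (Y i)‖ with hddef
        clear_value d
        have hdσ : σ ≤ d := by
          have : (0:ℝ) ≤ i * h * (1-κ) := by
            apply mul_nonneg (by positivity)
            linarith
          linarith
        have hdpos : 0 < d := lt_of_lt_of_le hσ hdσ
        set e : EuclideanSpace ℝ (Fin n) := (h / d) • (Y i - pr (Y i)) with hedef
        have hYe : Y (i+1) = Y i + e := by rw [hYsucc i, hedef, hddef]
        clear_value e
        have hne : ‖e‖ = h := by
          rw [hedef, norm_smul, Real.norm_of_nonneg (le_of_lt (div_pos hhpos hdpos)), ← hddef]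
          field_simp
        -- (a)
        have hstep_a : ‖Y (i+1) - q0‖ ≤ ((i:ℝ)+1) * h := by
          have : ‖Y (i+1) - q0‖ ≤ ‖Y i - q0‖ + ‖e‖ := by
            rw [hYe]
            have : Y i + e - q0 = (Y i - q0) + e := by abel
            rw [this]
            exact norm_add_le _ _
          rw [hne] at this
          push_cast
          linarith
        refine ⟨by push_cast; linarith [hstep_a], ?_⟩
        -- memberships in the ball K = closedBall xst (ε/4)
        have hq0x : ‖q0 - xst‖ ≤ ε/16 + ε/32 := by
          rw [hq0def]
          have h1 : ‖q + σ • v - xst‖ ≤ ‖q - xst‖ + ‖σ • v‖ := by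
            rw [add_sub_right_comm]; exact norm_add_le _ _
          rw [norm_smul, Real.norm_of_nonneg hσ.le, hv] at h1
          have hσε : σ ≤ ε/32 := le_trans hσρ hρ
          linarith
        have hTε : T ≤ ε/32 := le_trans hTρ hρ
        have hmemK : ∀ j : ℕ, (j:ℝ) * h ≤ T → ‖Y j - q0‖ ≤ (j:ℝ)*h →
            Y j ∈ closedBall xst (ε/4) := by
          intro j hjh hjq
          rw [mem_closedBall_iff_norm]
          have : ‖Y j - xst‖ ≤ ‖Y j - q0‖ + ‖q0 - xst‖ := norm_sub_le_norm_sub_add_norm_sub _ _ _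
          have hεε : ε/32 + (ε/16 + ε/32) ≤ ε/4 := by linarith
          linarith
        have hYiK : Y i ∈ closedBall xst (ε/4) := hmemK i hih iha
        have hYi1K : Y (i+1) ∈ closedBall xst (ε/4) := by
          apply hmemK (i+1) (by push_cast; linarith) (by push_cast; push_cast at hstep_a; linarith)
        -- uniform continuity of projections
        have hYdiff : ‖Y i - Y (i+1)‖ ≤ h₀ := by
          rw [hYe]
          have : Y i - (Y i + e) = -e := by abel
          rw [this, norm_neg, hne]
          exact hhh₀
        have hppθ : ‖pr (Y i) - pr (Y (i+1))‖ ≤ θ :=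
          hmod (Y i) (Y (i+1)) (pr (Y i)) (pr (Y (i+1))) hYiK hYi1K hYdiff (hpr _) (hpr _)
        -- the quadratic estimate
        set p : EuclideanSpace ℝ (Fin n) := pr (Y i) with hpdef
        set p' : EuclideanSpace ℝ (Fin n) := pr (Y (i+1)) with hp'def
        clear_value p p'
        set d' : ℝ := ‖Y (i+1) - p'‖ with hd'def
        clear_value d'
        have hp'C : p' ∈ C := by rw [hp'def]; exact (hpr (Y (i+1))).1
        have hopt : d ≤ ‖Y i - p'‖ := by
          rw [hddef, hpdef]; exact (hpr (Y i)).2 p' hp'C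
        have hid : Y i - p' = (Y (i+1) - p') - e := by rw [hYe]; abel
        have hexp : ‖Y i - p'‖^2 = d'^2 - 2*⟪Y (i+1) - p', e⟫ + ‖e‖^2 := by
          rw [hid, norm_sub_sq_real, hd'def]
        have hinner_split : ⟪Y (i+1) - p', e⟫ = ⟪Y i - p, e⟫ + ⟪e, e⟫ + ⟪p - p', e⟫ := by
          have : Y (i+1) - p' = (Y i - p) + e + (p - p') := by rw [hYe]; abel
          rw [this, inner_add_left, inner_add_left]
        have hiee : ⟪e, e⟫ = h^2 := by
          rw [real_inner_self_eq_norm_sq, hne]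
        have hiae : ⟪Y i - p, e⟫ = h * d := by
          rw [hedef, real_inner_smul_right, real_inner_self_eq_norm_sq, ← hddef]
          field_simp
        have hipp : -(θ*h) ≤ ⟪p - p', e⟫ := by
          have h1 : |⟪p - p', e⟫| ≤ ‖p - p'‖ * ‖e‖ := abs_real_inner_le_norm _ _
          have h2 : ‖p - p'‖ * ‖e‖ ≤ θ * h := by
            rw [hne]
            exact mul_le_mul_of_nonneg_right hppθ hhpos.le
          have := neg_abs_le ⟪p - p', e⟫
          linarith
        have hquad : d^2 + 2*h*d + h^2 - 2*θ*h ≤ d'^2 := by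
          have h1 : d^2 ≤ ‖Y i - p'‖^2 := pow_le_pow_left₀ hdpos.le hopt 2
          rw [hexp, hinner_split, hiee, hiae, hne] at h1
          linarith only [h1, hipp]
        have htarget : (d + h*(1-κ))^2 ≤ d'^2 := by
          have hsum : 0 ≤ 2*h*d*κ - 2*θ*h + h^2*(1-(1-κ)^2) := by
            have e1 : 2*h*σ*κ ≤ 2*h*d*κ := by
              have := mul_le_mul_of_nonneg_left hdσ (by positivity : (0:ℝ) ≤ 2*h*κ)
              linarith only [this]
            have e2 : 2*θ*h = h*σ*κ := by linear_combination h * hθκσ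
            have e3 : 0 ≤ h^2*(1-(1-κ)^2) := by
              have h2κ : (0:ℝ) ≤ 2 - κ := by linarith
              have := mul_nonneg (sq_nonneg h) (mul_nonneg hκpos.le h2κ)
              linarith only [this]
            have e4 : (0:ℝ) ≤ h*σ*κ := by positivity
            linarith only [e1, e2, e3, e4]
          linarith only [hquad, hsum]
        have hd'nn : 0 ≤ d + h*(1-κ) := by
          have : (0:ℝ) ≤ h*(1-κ) := mul_nonneg hhpos.le (by linarith only [hκ1])
          linarith only [this, hdpos]
        have hd'0 : 0 ≤ d' := by rw [hd'def]; exact norm_nonneg _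
        have hfin : d + h*(1-κ) ≤ d' := by
          have := Real.sqrt_le_sqrt htarget
          rwa [Real.sqrt_sq hd'nn, Real.sqrt_sq hd'0] at this
        have hstep_b : σ + ((i:ℝ)+1) * h * (1-κ) ≤ d' := by linarith only [ihb, hfin]
        push_cast
        linarith only [hstep_b]
    -- use the invariant at N
    obtain ⟨hAa, hAb⟩ := main N le_rfl
    set eN : EuclideanSpace ℝ (Fin n) := Y N - q0 with heNdef
    clear_value eN
    have heNT : ‖eN‖ ≤ T := by rw [← hNh]; exact hAa
    have hdNlow : σ + T * (1-κ) ≤ ‖Y N - pr (Y N)‖ := by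
      rw [← hNh]; exact hAb
    -- alignment
    set I : ℝ := ⟪eN, v⟫ with hIdef
    clear_value I
    have hYNq : Y N - q = eN + σ • v := by rw [heNdef, hq0def]; abel
    have hdN_le : ‖Y N - pr (Y N)‖ ≤ ‖Y N - q‖ := (hpr (Y N)).2 q hqC
    have hnormYNq : ‖Y N - q‖^2 = ‖eN‖^2 + 2*σ*I + σ^2 := by
      rw [hYNq, norm_add_sq_real, real_inner_smul_right, norm_smul,
        Real.norm_of_nonneg hσ.le, hv, hIdef]
      ring
    have halign : 2*σ*T - 2*σ*κ*T - 2*κ*T^2 ≤ 2*σ*I := by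
      have hTκnn : (0:ℝ) ≤ T*(1-κ) := mul_nonneg hT.le (by linarith)
      have h1 : (σ + T*(1-κ))^2 ≤ ‖Y N - q‖^2 := by
        apply pow_le_pow_left₀ (by linarith) (le_trans hdNlow hdN_le) 2
      rw [hnormYNq] at h1
      have h2 : ‖eN‖^2 ≤ T^2 := by
        apply pow_le_pow_left₀ (norm_nonneg _) heNT 2
      have h3 : (0:ℝ) ≤ (κ*T)^2 := sq_nonneg _
      linarith only [h1, h2, h3]
    -- deviation from the ray
    set A : ℝ := ‖eN - T • v‖ with hAdef
    clear_value A
    have hA2 : σ * A^2 ≤ 2*κ*T^2*(σ+T) := by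
      have h1 : A^2 = ‖eN‖^2 - 2*T*I + T^2 := by
        rw [hAdef, norm_sub_sq_real, real_inner_smul_right, norm_smul,
          Real.norm_of_nonneg hT.le, hv, hIdef]
        ring
      have h2 : ‖eN‖^2 ≤ T^2 := pow_le_pow_left₀ (norm_nonneg _) heNT 2
      have h1σ : σ*A^2 = σ*‖eN‖^2 - 2*σ*T*I + σ*T^2 := by rw [h1]; ring
      have m1 : σ*‖eN‖^2 ≤ σ*T^2 := mul_le_mul_of_nonneg_left h2 hσ.le
      have m2 : T*(2*σ*T - 2*σ*κ*T - 2*κ*T^2) ≤ T*(2*σ*I) :=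
        mul_le_mul_of_nonneg_left halign hT.le
      linarith only [h1σ, m1, m2]
    have hAγ : A ≤ γ/4 := by
      have hA2' : A^2 ≤ (γ/4)^2 := by
        have hb : 2*κ*T^2*(σ+T) ≤ σ*γ^2/16 := by
          have h1 : κ * (32*T^2*(σ+T)+1) ≤ σ*γ^2 := by
            rw [le_div_iff₀ (by positivity : (0:ℝ) < 32*T^2*(σ+T)+1)] at hκb
            exact hκb
          have h9 : (0:ℝ) ≤ κ := le_of_lt hκpos
          linarith only [h1, h9]
        have h5 : σ*A^2 ≤ σ*((γ/4)^2) := by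
          have he : σ*((γ/4)^2) = σ*γ^2/16 := by ring
          rw [he]
          linarith only [hA2, hb]
        exact le_of_mul_le_mul_left h5 hσ
      have := Real.sqrt_le_sqrt hA2'
      have hA0 : 0 ≤ A := by rw [hAdef]; exact norm_nonneg _
      rwa [Real.sqrt_sq hA0, Real.sqrt_sq (by positivity)] at this
    -- final contradiction
    have hray : q0 + T • v = q + ρ • v := by
      rw [hq0def, ← hTσρ, add_smul]
      abel
    have hfinal : ‖Y N - pr (Y N)‖ ≤ (ρ - γ) + A := by
      have h1 : ‖Y N - pr (Y N)‖ ≤ ‖Y N - c‖ := (hpr (Y N)).2 c hc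
      have h2 : Y N - c = (q + ρ • v - c) + (eN - T • v) := by
        rw [heNdef, ← hray]; abel
      have h3 : ‖Y N - c‖ ≤ ‖q + ρ • v - c‖ + A := by
        rw [h2, hAdef]; exact norm_add_le _ _
      have h4 : ‖q + ρ • v - c‖ = ρ - γ := by simp only [hγdef]; ring
      linarith
    have hκT : κ * T ≤ γ/4 := by
      have : κ * (4*(T+1)) ≤ γ := by
        rw [le_div_iff₀ (by positivity : (0:ℝ) < 4*(T+1))] at hκa
        exact hκa
      have h9 : (0:ℝ) ≤ κ := le_of_lt hκpos
      linarith only [this, h9]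
    have : ρ - κ*T ≤ (ρ - γ) + A := by
      have : σ + T*(1-κ) = ρ - κ*T := by rw [← hTσρ]; ring
      linarith only [this, hdNlow, hfinal]
    linarith

/-- Hypomonotonicity inequality for limiting normals, via the sun lemma. -/
private lemma limiting_hypomono {C : Set (EuclideanSpace ℝ (Fin n))} (hC : IsClosed C)
    {xst : EuclideanSpace ℝ (Fin n)} (hxst : xst ∈ C) {ε : ℝ} (hε : 0 < ε)
    (huniq : ∀ y ∈ ball xst ε, ∀ w w', IsProjPt C y w → IsProjPt C y w' → w = w')
    {w : EuclideanSpace ℝ (Fin n)} (hw : w ∈ limitingNormalCone C xst) :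
    ∀ c ∈ C, ⟪w, c - xst⟫ ≤ (‖w‖ * 16 / ε) * ‖c - xst‖ ^ 2 := by
  intro c hc
  rcases eq_or_ne w 0 with rfl | hw0
  · simp only [inner_zero_left]  -- ⟪0, ·⟫ = 0
    positivity
  · have hwpos : 0 < ‖w‖ := norm_pos_iff.mpr hw0
    obtain ⟨Q, V, hQC, hV, hQlim, hVlim⟩ := hw
    set ρ : ℝ := ε/32 with hρdef
    have hρpos : 0 < ρ := by positivity
    set u : ℕ → EuclideanSpace ℝ (Fin n) := fun j => ‖V j‖⁻¹ • V j with hudef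
    set uw : EuclideanSpace ℝ (Fin n) := ‖w‖⁻¹ • w with huwdef
    -- eventual facts
    obtain ⟨J₁, hJ₁⟩ := Metric.tendsto_atTop.mp hQlim (ε/16) (by positivity)
    obtain ⟨J₂, hJ₂⟩ := Metric.tendsto_atTop.mp hVlim (‖w‖) hwpos
    set J : ℕ := max J₁ J₂ with hJdef
    have hVne : ∀ j ≥ J, V j ≠ 0 := by
      intro j hj hzero
      have := hJ₂ j (le_trans (le_max_right _ _) hj)
      rw [hzero, dist_comm, dist_zero_right] at this
      exact lt_irrefl _ this
    -- per-j extended projection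
    have hproj : ∀ j ≥ J, IsProjPt C (Q j + ρ • u j) (Q j) := by
      intro j hj
      obtain ⟨t, ht0, y, hyP, hVeq⟩ := hV j
      have hVj : V j ≠ 0 := hVne j hj
      have htpos : 0 < t := by
        rcases lt_or_eq_of_le ht0 with h | h
        · exact h
        · exfalso; apply hVj; rw [hVeq, ← h, zero_smul]
      have hyQ : y - Q j ≠ 0 := by
        intro h0; apply hVj; rw [hVeq, h0, smul_zero]
      set dj : ℝ := ‖y - Q j‖ with hdjdef
      have hdjpos : 0 < dj := norm_pos_iff.mpr hyQ
      have huj : u j = dj⁻¹ • (y - Q j) := by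
        simp only [hudef, hVeq, norm_smul, Real.norm_of_nonneg ht0]
        rw [mul_inv, smul_smul]
        congr 1
        rw [hdjdef]
        have ht : t ≠ 0 := ne_of_gt htpos
        field_simp
      set σj : ℝ := min dj ρ with hσjdef
      have hσjpos : 0 < σj := lt_min hdjpos hρpos
      have hσjρ : σj ≤ ρ := min_le_right _ _
      have hσjdj : σj ≤ dj := min_le_left _ _
      have hstart : IsProjPt C (Q j + σj • u j) (Q j) := by
        have hs := projPt_shrink hyP (s := σj/dj) (by positivity)
          (by rw [div_le_one hdjpos]; exact hσjdj)
        have heq : Q j + (σj/dj) • (y - Q j) = Q j + σj • u j := by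
          rw [huj, smul_smul, div_eq_mul_inv]
        rwa [heq] at hs
      have hQx : ‖Q j - xst‖ ≤ ε/16 := by
        have := hJ₁ j (le_trans (le_max_left _ _) hj)
        rw [dist_eq_norm] at this
        linarith
      have hunorm : ‖u j‖ = 1 := norm_inv_smul_self hVj
      exact sun_lemma hC hxst hε huniq hQx hunorm hσjpos hσjρ (le_refl ρ) hstart
    -- pass to the limit
    have hucont : Tendsto (fun j => u j) atTop (nhds uw) := by
      have hcont : ContinuousAt (fun z : EuclideanSpace ℝ (Fin n) => ‖z‖⁻¹ • z) w := by
        exact (continuousAt_id.norm.inv₀ (norm_ne_zero_iff.mpr hw0)).smul continuousAt_id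
      exact hcont.tendsto.comp hVlim
    have hZlim : Tendsto (fun j => Q j + ρ • u j) atTop (nhds (xst + ρ • uw)) :=
      hQlim.add (hucont.const_smul ρ)
    have hfinalproj : IsProjPt C (xst + ρ • uw) xst := by
      refine ⟨hxst, fun c' hc' => ?_⟩
      have huwn : ‖uw‖ = 1 := by
        rw [huwdef]; exact norm_inv_smul_self hw0
      have hlhs : ‖(xst + ρ • uw) - xst‖ = ρ := by
        rw [add_sub_cancel_left, norm_smul, Real.norm_of_nonneg hρpos.le, huwn, mul_one]
      rw [hlhs]
      apply ge_of_tendsto ((hZlim.sub tendsto_const_nhds).norm)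
      rw [eventually_atTop]
      refine ⟨J, fun j hj => ?_⟩
      have h1 := (hproj j hj).2 c' hc'
      have hujn : ‖u j‖ = 1 := by
        simp only [hudef]; exact norm_inv_smul_self (hVne j hj)
      have h2 : ‖(Q j + ρ • u j) - Q j‖ = ρ := by
        rw [add_sub_cancel_left, norm_smul, Real.norm_of_nonneg hρpos.le, hujn, mul_one]
      linarith [h1, h2.ge, h2.le]
    -- conclude
    have hkey := projPt_inner_le hfinalproj hc
    have hsimp : (xst + ρ • uw) - xst = (ρ/‖w‖) • w := by
      rw [huwdef, smul_smul]
      have : ρ * ‖w‖⁻¹ = ρ/‖w‖ := by rw [div_eq_mul_inv]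
      rw [this]
      abel
    rw [hsimp, real_inner_smul_left] at hkey
    rw [hρdef] at hkey
    have hwne : ‖w‖ ≠ 0 := ne_of_gt hwpos
    have hεne : ε ≠ 0 := ne_of_gt hε
    have h1 : ε / (16*‖w‖) * ⟪w, c - xst⟫ ≤ ‖c - xst‖^2 := by
      have he : ε / (16*‖w‖) * ⟪w, c - xst⟫ = 2 * (ε/32/‖w‖ * ⟪w, c - xst⟫) := by ring
      rw [he]; exact hkey
    have h2 := mul_le_mul_of_nonneg_left h1 (le_of_lt (show (0:ℝ) < 16*‖w‖/ε by positivity))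
    have h3 : (16*‖w‖/ε) * (ε/(16*‖w‖) * ⟪w, c - xst⟫) = ⟪w, c - xst⟫ := by
      field_simp
    rw [h3] at h2
    have h4 : (16*‖w‖/ε) * ‖c - xst‖^2 = ‖w‖*16/ε * ‖c - xst‖^2 := by ring
    rw [h4] at h2
    exact h2

end Aux

open Metric
open scoped RealInnerProductSpace

/-- Finite termination of the Douglas--Rachford shadow sequence. -/
theorem stmt12 (C : Set (EuclideanSpace ℝ (Fin n))) (hC : IsClosed C)
    (S : AffineSubspace ℝ (EuclideanSpace ℝ (Fin n)))
    (hCS : (C ∩ (S : Set (EuclideanSpace ℝ (Fin n)))).Nonempty)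
    (PS : EuclideanSpace ℝ (Fin n) → EuclideanSpace ℝ (Fin n))
    (hPS : IsMetricProj (S : Set (EuclideanSpace ℝ (Fin n))) PS)
    (x u z : ℕ → EuclideanSpace ℝ (Fin n))
    (hx : ∀ k : ℕ, x (k + 1) = PS (z k))
    (hu : ∀ k : ℕ, IsProjPt C (2 • x (k + 1) - z k) (u (k + 1)))
    (hz : ∀ k : ℕ, z (k + 1) = z k + u (k + 1) - x (k + 1))
    (zstar xstar : EuclideanSpace ℝ (Fin n))
    (hzlim : Tendsto z atTop (nhds zstar))
    (hulim : Tendsto u atTop (nhds xstar))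
    (hxlim : Tendsto x atTop (nhds xstar))
    (hxstar : xstar = PS zstar)
    -- `C` is prox-regular at `xstar` for `xstar - zstar`
    (hproxreg : IsProjPt C (xstar + (xstar - zstar)) xstar ∧
      ∀ w, IsProjPt C (xstar + (xstar - zstar)) w → w = xstar)
    -- `P_C` is single-valued on a neighborhood of `xstar`
    (hsingle : ∃ ε > 0, ∀ y ∈ Metric.ball (xstar : EuclideanSpace ℝ (Fin n)) ε,
      ∀ w w', IsProjPt C y w → IsProjPt C y w' → w = w')
    -- non-degeneracy condition
    (hndc : xstar - zstar ∈ interior (limitingNormalCone C xstar)) :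
    ∃ K : ℕ, ∀ k : ℕ, K ≤ k → u k = xstar := by
  classical
  -- setup
  obtain ⟨ε, hε, huniq⟩ := hsingle
  have hxsC : xstar ∈ C := hproxreg.1.1
  set vs : EuclideanSpace ℝ (Fin n) := xstar - zstar with hvsdef
  obtain ⟨δ, hδ, hball⟩ : ∃ δ > 0, ball vs δ ⊆ limitingNormalCone C xstar := by
    obtain ⟨s, hs1, hs2, hs3⟩ := mem_interior.mp hndc
    obtain ⟨δ, hδ, hb⟩ := Metric.isOpen_iff.mp hs2 vs hs3
    exact ⟨δ, hδ, hb.trans hs1⟩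
  set M : ℝ := (‖vs‖ + δ) * 16 / ε with hMdef
  set d : ℕ → EuclideanSpace ℝ (Fin n) := fun k => u (k+1) - xstar with hddef
  set e : ℕ → EuclideanSpace ℝ (Fin n) := fun k => (x (k+1) + x (k+1) - z k) - (xstar + vs)
    with hedef
  -- limits
  have hx1 : Tendsto (fun k => x (k+1)) atTop (nhds xstar) :=
    hxlim.comp (tendsto_add_atTop_nat 1)
  have hu1 : Tendsto (fun k => u (k+1)) atTop (nhds xstar) :=
    hulim.comp (tendsto_add_atTop_nat 1)
  have hdlim : Tendsto (fun k => ‖d k‖) atTop (nhds 0) := by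
    have : Tendsto d atTop (nhds (xstar - xstar)) := hu1.sub tendsto_const_nhds
    rw [sub_self] at this
    simpa using this.norm
  have helim : Tendsto (fun k => ‖e k‖) atTop (nhds 0) := by
    have h1 : Tendsto (fun k => x (k+1) + x (k+1) - z k) atTop
        (nhds (xstar + xstar - zstar)) := (hx1.add hx1).sub hzlim
    have h2 : Tendsto e atTop (nhds ((xstar + xstar - zstar) - (xstar + vs))) :=
      h1.sub tendsto_const_nhds
    have h3 : (xstar + xstar - zstar) - (xstar + vs) = 0 := by
      rw [hvsdef]; abel
    rw [h3] at h2
    simpa using h2.norm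
  -- the key inequality for each k with d k ≠ 0
  have hkey : ∀ k : ℕ, d k ≠ 0 → δ/2 ≤ ‖e k‖ + M * ‖d k‖ := by
    intro k hdk
    have hdkpos : 0 < ‖d k‖ := norm_pos_iff.mpr hdk
    -- DR inequality
    have hDR : ⟪vs, d k⟫ ≥ (1/2) * ‖d k‖^2 - ‖e k‖ * ‖d k‖ := by
      have hproj := projPt_inner_le (hu k) hxsC
      have hy2 : (2:ℕ) • x (k+1) - z k = x (k+1) + x (k+1) - z k := by
        rw [two_nsmul]
      rw [hy2] at hproj
      have hid1 : (x (k+1) + x (k+1) - z k) - u (k+1) = e k + vs - d k := by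
        simp only [hedef, hddef]
        abel
      have hid2 : xstar - u (k+1) = -(d k) := by simp only [hddef]; abel
      rw [hid1, hid2] at hproj
      have hexp : ⟪e k + vs - d k, -(d k)⟫ =
          -⟪e k, d k⟫ - ⟪vs, d k⟫ + ‖d k‖^2 := by
        rw [inner_neg_right, inner_sub_left, inner_add_left, real_inner_self_eq_norm_sq]
        ring
      rw [hexp] at hproj
      have hnorm : ‖-(d k)‖^2 = ‖d k‖^2 := by rw [norm_neg]
      rw [hnorm] at hproj
      have hcs : ⟪e k, d k⟫ ≤ ‖e k‖ * ‖d k‖ := real_inner_le_norm _ _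
      linarith
    -- the limiting normal in the perturbed direction
    set wk : EuclideanSpace ℝ (Fin n) := vs + (δ/2) • (‖d k‖⁻¹ • d k) with hwkdef
    have hwkmem : wk ∈ limitingNormalCone C xstar := by
      apply hball
      rw [mem_ball_iff_norm, hwkdef]
      have : vs + (δ/2) • (‖d k‖⁻¹ • d k) - vs = (δ/2) • (‖d k‖⁻¹ • d k) := by abel
      rw [this, norm_smul, Real.norm_of_nonneg (by positivity : (0:ℝ) ≤ δ/2),
        norm_inv_smul_self hdk]
      linarith
    have hwknorm : ‖wk‖ ≤ ‖vs‖ + δ := by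
      rw [hwkdef]
      have h1 : ‖vs + (δ/2) • (‖d k‖⁻¹ • d k)‖ ≤ ‖vs‖ + ‖(δ/2) • (‖d k‖⁻¹ • d k)‖ :=
        norm_add_le _ _
      rw [norm_smul, Real.norm_of_nonneg (by positivity : (0:ℝ) ≤ δ/2),
        norm_inv_smul_self hdk] at h1
      linarith
    have hhypo := limiting_hypomono hC hxsC hε huniq hwkmem (u (k+1)) (hu k).1
    have hudx : u (k+1) - xstar = d k := rfl
    rw [hudx] at hhypo
    have hinner_wk : ⟪wk, d k⟫ = ⟪vs, d k⟫ + (δ/2) * ‖d k‖ := by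
      rw [hwkdef, inner_add_left, real_inner_smul_left, real_inner_smul_left,
        real_inner_self_eq_norm_sq]
      have hdne : ‖d k‖ ≠ 0 := ne_of_gt hdkpos
      field_simp
    have hMb : (‖wk‖ * 16 / ε) * ‖d k‖^2 ≤ M * ‖d k‖^2 := by
      apply mul_le_mul_of_nonneg_right _ (by positivity)
      rw [hMdef]
      gcongr
    have hchain : ⟪vs, d k⟫ + (δ/2) * ‖d k‖ ≤ M * ‖d k‖^2 := by
      rw [← hinner_wk]
      exact le_trans hhypo hMb
    have hmul : (δ/2) * ‖d k‖ ≤ (‖e k‖ + M * ‖d k‖) * ‖d k‖ := by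
      linarith only [hchain, hDR, sq_nonneg ‖d k‖]
    exact le_of_mul_le_mul_right hmul hdkpos
  -- finish by taking limits
  have hsum : Tendsto (fun k => ‖e k‖ + M * ‖d k‖) atTop (nhds 0) := by
    have := helim.add (hdlim.const_mul M)
    simpa using this
  have hev := hsum.eventually_lt_const (show (0:ℝ) < δ/2 by positivity)
  rw [eventually_atTop] at hev
  obtain ⟨K, hK⟩ := hev
  refine ⟨K + 1, fun k hk => ?_⟩
  obtain ⟨j, rfl⟩ := Nat.exists_eq_add_of_le hk
  have hdz : d (K + j) = 0 := by
    by_contra hne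
    have h1 := hkey (K + j) hne
    have h2 := hK (K + j) (Nat.le_add_right K j)
    linarith
  have : K + 1 + j = (K + j) + 1 := by omega
  rw [this]
  simp only [hddef] at hdz
  exact sub_eq_zero.mp hdz
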